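/- Let a ≥ 1 and n ≥ 1 be integers, let w be a valid m-acyclic weight function of the extended Shi arrangement 𝒜^{a,a+1}_{n−1} with order of gains σ and Pak–Stanley label (f(1),…,f(n)). If i and j are indices with σ⁻¹(i) < σ⁻¹(j) and either i > j or w(i,j) > 0 holds, then f(i) > f(j). -/

import Mathlib

/-- Cyclically consecutive pairs along a list of vertices. -/
def cpairs {n : ℕ} (c : List (Fin n)) : List (Fin n × Fin n) := c.zip (c.rotate 1)

/-- `c` is a directed cycle of the weighted digraph `w`, an edge `u → v`
being present when `w u v ≠ ⊥` (`⊥` stands for `-∞`). -/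
def IsCycle {n : ℕ} (w : Fin n → Fin n → WithBot ℤ) (c : List (Fin n)) : Prop :=
  2 ≤ c.length ∧ c.Nodup ∧ ∀ p ∈ cpairs c, w p.1 p.2 ≠ ⊥

/-- Total weight of the edges of a cycle. -/
def cycWeight {n : ℕ} (w : Fin n → Fin n → WithBot ℤ) (c : List (Fin n)) : WithBot ℤ :=
  ((cpairs c).map fun p => w p.1 p.2).sum

/-- An `m`-ascending cycle: a directed cycle of nonnegative total weight. -/
def MAscending {n : ℕ} (w : Fin n → Fin n → WithBot ℤ) (c : List (Fin n)) : Prop :=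
  IsCycle w c ∧ 0 ≤ cycWeight w c

/-- A weighted digraph is `m`-acyclic if it has no `m`-ascending cycle. -/
def MAcyclic {n : ℕ} (w : Fin n → Fin n → WithBot ℤ) : Prop :=
  ∀ c : List (Fin n), ¬ MAscending w c

/-- `w` is a valid weight function of the contiguous integral deformation of
the braid arrangement determined by the bounds `a = α` and `b = β`:
`w i j ∈ {α i j, …, β i j} ∪ {⊥}`, `w i j = ⊥ ↔ w j i = β j i`, and
`w j i = -1 - w i j` whenever both values are finite.  There are no loops. -/
def ValidW {n : ℕ} (a b : Fin n → Fin n → ℤ) (w : Fin n → Fin n → WithBot ℤ) : Prop :=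
  (∀ i, w i i = ⊥) ∧
  ∀ i j : Fin n, i ≠ j →
    (w i j ≠ ⊥ → (a i j : WithBot ℤ) ≤ w i j ∧ w i j ≤ (b i j : WithBot ℤ)) ∧
    (w i j = ⊥ ↔ w j i = (b j i : WithBot ℤ)) ∧
    (∀ x y : ℤ, w i j = (x : WithBot ℤ) → w j i = (y : WithBot ℤ) → y = -1 - x)

/-- Lower bounds of the extended Shi arrangement `A^{a,a+1}_{n-1}`:
`α(i,j) = 1 - a` for `i < j`, extended by `α(j,i) = -β(i,j) = -a`. -/
def shiAlpha {n : ℕ} (a : ℤ) (u v : Fin n) : ℤ := if u < v then 1 - a else -a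

/-- Upper bounds of the extended Shi arrangement `A^{a,a+1}_{n-1}`:
`β(i,j) = a` for `i < j`, extended by `β(j,i) = -α(i,j) = a - 1`. -/
def shiBeta {n : ℕ} (a : ℤ) (u v : Fin n) : ℤ := if u < v then a else a - 1

/-- `f` is the Pak–Stanley label of the weight function `w` with order of
gains `σ`:  `f i` is the sum of the weights `w i j` over the `j` succeeding
`i` in `σ` (the separations), plus the number of such `j` with `j < i`
(the inversions). -/
def IsPSLabel {n : ℕ} (σ : Equiv.Perm (Fin n)) (w : Fin n → Fin n → WithBot ℤ)
    (f : Fin n → ℤ) : Prop :=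
  ∀ i : Fin n, (f i : WithBot ℤ) =
    (∑ j ∈ Finset.univ.filter fun j => σ.symm i < σ.symm j, w i j)
      + (((Finset.univ.filter fun j => σ.symm i < σ.symm j ∧ j < i).card : ℤ) : WithBot ℤ)

/-- `f` is an `a`-parking function: it consists of nonnegative integers and
its weakly increasing rearrangement `f̃` satisfies `f̃ i ≤ a * i`
(`0`-indexed), i.e. `f̃(i) ≤ a (i - 1)` in `1`-indexed notation. -/
def IsAPark {n : ℕ} (a : ℤ) (f : Fin n → ℤ) : Prop :=
  (∀ i, 0 ≤ f i) ∧
  ∃ τ : Equiv.Perm (Fin n), Monotone (f ∘ τ) ∧ ∀ i : Fin n, f (τ i) ≤ a * (i : ℤ)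

theorem stmt15 (n : ℕ) (hn : 1 ≤ n) (a : ℤ) (ha : 1 ≤ a)
    (w : Fin n → Fin n → WithBot ℤ)
    (hw : ValidW (shiAlpha a) (shiBeta a) w) (hac : MAcyclic w)
    (σ : Equiv.Perm (Fin n)) (hσ : ∀ i j : Fin n, i < j → 0 ≤ w (σ i) (σ j))
    (f : Fin n → ℤ) (hf : IsPSLabel σ w f)
    (i j : Fin n) (hij : σ.symm i < σ.symm j)
    (h : j < i ∨ 0 < w i j) :
    f j < f i := by
  classical
  set g : Fin n → Fin n → ℤ := fun u v => (w u v).unbotD 0 with hgdef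
  -- basic facts on pairs in σ-order
  have key : ∀ u v : Fin n, σ.symm u < σ.symm v →
      w u v = (g u v : WithBot ℤ) ∧ 0 ≤ g u v := by
    intro u v huv
    have h0 : (0 : WithBot ℤ) ≤ w u v := by
      have := hσ (σ.symm u) (σ.symm v) huv
      simpa using this
    have hne : w u v ≠ ⊥ := by
      intro hb; rw [hb] at h0; exact absurd h0 (by simp)
    obtain ⟨x, hx⟩ := WithBot.ne_bot_iff_exists.mp hne
    have hgx : g u v = x := by simp [hgdef, ← hx]
    refine ⟨by rw [hgx, hx], ?_⟩
    rw [hgx]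
    rw [← hx] at h0
    exact_mod_cast h0
  have hij' : i ≠ j := by
    intro e; subst e; exact absurd hij (lt_irrefl _)
  have hji' := key i j hij
  have hgij1 : j < i ∨ 1 ≤ g i j := by
    rcases h with h | h
    · exact Or.inl h
    · right
      rw [hji'.1] at h
      exact_mod_cast h
  -- per-term comparison for common successors k
  have step : ∀ k : Fin n, σ.symm j < σ.symm k →
      g j k + (if k < j then (1:ℤ) else 0) ≤ g i k + (if k < i then (1:ℤ) else 0) := by
    intro k hjk
    have hikσ : σ.symm i < σ.symm k := hij.trans hjk
    have hwik := key i k hikσ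
    have hwjk := key j k hjk
    have hik' : i ≠ k := by intro e; subst e; exact absurd hikσ (lt_irrefl _)
    have hjk' : j ≠ k := by intro e; subst e; exact absurd hjk (lt_irrefl _)
    have hvik : (i : ℕ) ≠ (k : ℕ) := fun e => hik' (Fin.val_injective e)
    have hvjk : (j : ℕ) ≠ (k : ℕ) := fun e => hjk' (Fin.val_injective e)
    by_cases hb : w k i = ⊥
    · -- boundary case: w i k attains its maximum
      have h1 : w i k = ((shiBeta a i k : ℤ) : WithBot ℤ) :=
        ((hw.2 k i (Ne.symm hik')).2.1).mp hb
      have hgik : g i k = shiBeta a i k := by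
        rw [hwik.1] at h1; exact_mod_cast h1
      have h2 : w j k ≤ ((shiBeta a j k : ℤ) : WithBot ℤ) :=
        ((hw.2 j k hjk').1 (by rw [hwjk.1]; exact WithBot.coe_ne_bot)).2
      have hgjk : g j k ≤ shiBeta a j k := by
        rw [hwjk.1] at h2; exact_mod_cast h2
      simp only [shiBeta, Fin.lt_def] at hgik hgjk ⊢
      split_ifs at hgik hgjk ⊢ <;> omega
    · -- generic case: use the 3-cycle (i, j, k)
      obtain ⟨y, hy⟩ := WithBot.ne_bot_iff_exists.mp hb
      have hrel : y = -1 - g i k := (hw.2 i k hik').2.2 (g i k) y hwik.1 hy.symm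
      have hnodup : ([i, j, k] : List (Fin n)).Nodup := by
        simp [hij', hik', hjk']
      have hcp : cpairs ([i, j, k] : List (Fin n)) = [(i, j), (j, k), (k, i)] := rfl
      have hcyc : IsCycle w [i, j, k] := by
        refine ⟨by simp, hnodup, ?_⟩
        intro p hp
        rw [hcp] at hp
        simp only [List.mem_cons, List.mem_singleton, List.not_mem_nil, or_false] at hp
        rcases hp with rfl | rfl | rfl
        · rw [hji'.1]; exact WithBot.coe_ne_bot
        · rw [hwjk.1]; exact WithBot.coe_ne_bot
        · exact hb
      have hneg : ¬ (0 : WithBot ℤ) ≤ cycWeight w [i, j, k] :=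
        fun hge => hac [i, j, k] ⟨hcyc, hge⟩
      have hcw : cycWeight w [i, j, k] = ((g i j + g j k + y : ℤ) : WithBot ℤ) := by
        rw [cycWeight, hcp]
        simp only [List.map_cons, List.map_nil, List.sum_cons, List.sum_nil]
        rw [hji'.1, hwjk.1, ← hy, add_zero, ← WithBot.coe_add, ← WithBot.coe_add,
          WithBot.coe_inj]
        ring
      rw [hcw] at hneg
      have hlt : g i j + g j k + y < 0 := by
        by_contra hc
        exact hneg (by exact_mod_cast not_lt.mp hc)
      have htri : g i j + g j k ≤ g i k := by omega
      have h0ij := hji'.2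
      rcases hgij1 with hc | hc
      · have hvc : (j : ℕ) < (i : ℕ) := hc
        simp only [Fin.lt_def]
        split_ifs <;> omega
      · simp only [Fin.lt_def]
        split_ifs <;> omega
  -- formula for f as an integer-valued sum
  have ffun : ∀ u : Fin n, f u =
      ∑ k ∈ Finset.univ.filter (fun k => σ.symm u < σ.symm k),
        (g u k + if k < u then (1:ℤ) else 0) := by
    intro u
    have h1 := hf u
    have h2 : (∑ k ∈ Finset.univ.filter (fun k => σ.symm u < σ.symm k), w u k)
        = ((∑ k ∈ Finset.univ.filter (fun k => σ.symm u < σ.symm k), g u k : ℤ) : WithBot ℤ) := by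
      rw [WithBot.coe_sum]
      refine Finset.sum_congr rfl fun k hk => ?_
      exact (key u k (by simpa using hk)).1
    rw [h2, ← WithBot.coe_add] at h1
    have h1' : f u = (∑ k ∈ Finset.univ.filter (fun k => σ.symm u < σ.symm k), g u k)
        + ((Finset.univ.filter fun k => σ.symm u < σ.symm k ∧ k < u).card : ℤ) :=
      WithBot.coe_inj.mp h1
    rw [h1', Finset.sum_add_distrib]
    congr 1
    rw [Finset.sum_boole, Finset.filter_filter]
  set Si := Finset.univ.filter (fun k => σ.symm i < σ.symm k) with hSi
  set Sj := Finset.univ.filter (fun k => σ.symm j < σ.symm k) with hSj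
  have hjSi : j ∈ Si := by simp [hSi, hij]
  have hjSj : j ∉ Sj := by simp [hSj]
  have hsub : insert j Sj ⊆ Si := by
    intro k hk
    rcases Finset.mem_insert.mp hk with rfl | hk
    · exact hjSi
    · simp only [hSj, Finset.mem_filter, Finset.mem_univ, true_and] at hk
      simp [hSi, hij.trans hk]
  have htj : (1 : ℤ) ≤ g i j + if j < i then (1:ℤ) else 0 := by
    have h0 := hji'.2
    by_cases hd : j < i
    · simp only [if_pos hd]; omega
    · simp only [if_neg hd]
      rcases hgij1 with hc | hc
      · exact absurd hc hd
      · omega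
  calc f j = ∑ k ∈ Sj, (g j k + if k < j then (1:ℤ) else 0) := ffun j
    _ ≤ ∑ k ∈ Sj, (g i k + if k < i then (1:ℤ) else 0) := by
        refine Finset.sum_le_sum fun k hk => ?_
        simp only [hSj, Finset.mem_filter, Finset.mem_univ, true_and] at hk
        exact step k hk
    _ < (g i j + if j < i then (1:ℤ) else 0)
        + ∑ k ∈ Sj, (g i k + if k < i then (1:ℤ) else 0) := by
        have hpos : (0:ℤ) < g i j + if j < i then (1:ℤ) else 0 := lt_of_lt_of_le one_pos htj
        linarith
    _ = ∑ k ∈ insert j Sj, (g i k + if k < i then (1:ℤ) else 0) := by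
        rw [Finset.sum_insert hjSj]
    _ ≤ ∑ k ∈ Si, (g i k + if k < i then (1:ℤ) else 0) := by
        refine Finset.sum_le_sum_of_subset_of_nonneg hsub fun k hk _ => ?_
        simp only [hSi, Finset.mem_filter, Finset.mem_univ, true_and] at hk
        have := (key i k hk).2
        split_ifs <;> omega
    _ = f i := (ffun i).symm
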